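/- Let n = 2k+1 with k ≥ 2, let f be the canonical positive cycle of size n, and let μ_odd be the block-parallel schedule with o-blocks (0,1,...,k-1) and (k, k+1, 2k, 2k-1, ..., k+2). Then the parallelized dynamics f_{μ_odd} satisfies: f_{μ_odd}(x)_i = x_{k-1} for all i ∈ {0,...,k-1}, f_{μ_odd}(x)_k = f_{μ_odd}(x)_{k+1} = x_{k+2}, and f_{μ_odd}(x)_j = x_j for all j ∈ {k+2,...,2k}. -/

import Mathlib

/-- Update of the configuration `x` of the BAN `f` on the block `W` of automata. -/
def upd {n : ℕ} (f : (Fin n → Bool) → Fin n → Bool) (W : Finset (Fin n))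
    (x : Fin n → Bool) : Fin n → Bool :=
  fun i => if i ∈ W then f x i else x i

/-- Dynamics of `f` under the sequence of blocks `Ws`, applied left to right. -/
def run {n : ℕ} (f : (Fin n → Bool) → Fin n → Bool) (Ws : List (Finset (Fin n)))
    (x : Fin n → Bool) : Fin n → Bool :=
  Ws.foldl (fun y W => upd f W y) x

/-- The canonical positive cycle BAN of size `n`: `f_i(x) = x_{(i-1) mod n}`. -/
def posCycle (n : ℕ) (x : Fin n → Bool) (i : Fin n) : Bool :=
  x ⟨(i.val + n - 1) % n, Nat.mod_lt _ i.pos⟩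

/-- The `m`-th element (0-indexed) of the o-block `(k, k+1, 2k, 2k-1, …, k+2)`. -/
def oddSeq (k m : ℕ) : ℕ :=
  if m = 0 then k else if m = 1 then k + 1 else 2 * k + 2 - m

/-- Sequentialization of `μ_odd = {(0,1,…,k-1), (k,k+1,2k,2k-1,…,k+2)}` on the
positive cycle of size `n = 2k+1`: `ℓ = k(k+1)` blocks, the `t`-th block
(0-indexed) being `{t mod k, oddSeq k (t mod (k+1))}`. -/
def oddBlocks (k : ℕ) (hk : 2 ≤ k) : List (Finset (Fin (2 * k + 1))) :=
  (List.range (k * (k + 1))).map (fun t =>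
    { ⟨t % k, by have := Nat.mod_lt t (show 0 < k by omega); omega⟩,
      ⟨oddSeq k (t % (k + 1)), by
        have h1 : t % (k + 1) < k + 1 := Nat.mod_lt t (by omega)
        unfold oddSeq
        split
        · omega
        · split <;> omega⟩ })

-- infrastructure
lemma qmod (M q r x : ℕ) (h : x = q * M + r) (hr : r < M) : x % M = r := by
  subst h
  rw [Nat.add_comm, Nat.add_mul_mod_self_right]
  exact Nat.mod_eq_of_lt hr

lemma no_between {M r u a b : ℕ} (hu : u % M = r) (hub : b ≤ u + M)
    (hua : u < a) : ∀ s, a ≤ s → s < b → s % M ≠ r := by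
  intro s h1 h2 hs
  rcases Nat.eq_zero_or_pos M with hM | hM
  · subst hM; simp [Nat.mod_zero] at hu hs; omega
  have hus : u < s := lt_of_lt_of_le hua h1
  have h3 := Nat.div_add_mod u M
  have h4 := Nat.div_add_mod s M
  rw [hu] at h3
  rw [hs] at h4
  have hq : u / M < s / M := by
    by_contra hq
    push_neg at hq
    have := Nat.mul_le_mul (Nat.le_refl M) hq
    omega
  have h5 : M * (u / M + 1) ≤ M * (s / M) := Nat.mul_le_mul (Nat.le_refl M) hq
  have h6 : M * (u / M + 1) = M * (u / M) + M := by ring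
  omega

def blk (k : ℕ) (hk : 2 ≤ k) (t : ℕ) : Finset (Fin (2 * k + 1)) :=
  { ⟨t % k, by have := Nat.mod_lt t (show 0 < k by omega); omega⟩,
    ⟨oddSeq k (t % (k + 1)), by
      have h1 : t % (k + 1) < k + 1 := Nat.mod_lt t (by omega)
      unfold oddSeq
      split
      · omega
      · split <;> omega⟩ }

lemma oddBlocks_eq (k : ℕ) (hk : 2 ≤ k) :
    oddBlocks k hk = (List.range (k * (k + 1))).map (blk k hk) := rfl

def Vt (k : ℕ) (hk : 2 ≤ k) (x : Fin (2 * k + 1) → Bool) (t : ℕ) : Fin (2 * k + 1) → Bool :=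
  run (posCycle (2 * k + 1)) ((oddBlocks k hk).take t) x

lemma Vt_zero (k : ℕ) (hk : 2 ≤ k) (x : Fin (2 * k + 1) → Bool) : Vt k hk x 0 = x := rfl

lemma Vt_succ (k : ℕ) (hk : 2 ≤ k) (x : Fin (2 * k + 1) → Bool) (t : ℕ)
    (ht : t < k * (k + 1)) :
    Vt k hk x (t + 1) = upd (posCycle (2 * k + 1)) (blk k hk t) (Vt k hk x t) := by
  unfold Vt run
  rw [oddBlocks_eq]
  have h1 : ((List.range (k * (k + 1))).map (blk k hk)).take (t + 1)
      = ((List.range (k * (k + 1))).map (blk k hk)).take t ++ [blk k hk t] := by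
    rw [List.take_succ]
    congr 1
    have : ((List.range (k * (k + 1))).map (blk k hk))[t]? = some (blk k hk t) := by
      simp [List.getElem?_map, List.getElem?_range, ht]
    rw [this]
    rfl
  rw [h1, List.foldl_append]
  rfl

lemma mem_blk {k : ℕ} {hk : 2 ≤ k} {t : ℕ} (i : Fin (2 * k + 1)) :
    i ∈ blk k hk t ↔ i.val = t % k ∨ i.val = oddSeq k (t % (k + 1)) := by
  unfold blk
  simp [Finset.mem_insert, Fin.ext_iff]

lemma oddSeq_ge {k m : ℕ} (hm : m ≤ k) : k ≤ oddSeq k m := by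
  unfold oddSeq; split
  · omega
  · split <;> omega

lemma oddSeq_two (k m : ℕ) (h2 : 2 ≤ m) (hm : m ≤ k) : oddSeq k m = 2 * k + 2 - m := by
  unfold oddSeq; split
  · omega
  · split <;> omega

lemma oddSeq_zero (k : ℕ) : oddSeq k 0 = k := rfl

lemma oddSeq_one (k : ℕ) : oddSeq k 1 = k + 1 := rfl

lemma oddSeq_inv {k m v : ℕ} (hm : m ≤ k) (hk : 2 ≤ k) (h : oddSeq k m = v) :
    (v = k ∧ m = 0) ∨ (v = k + 1 ∧ m = 1) ∨ (k + 2 ≤ v ∧ v ≤ 2 * k ∧ m = 2 * k + 2 - v) := by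
  unfold oddSeq at h
  split at h
  · omega
  · split at h <;> omega

lemma stepMem (k : ℕ) (hk : 2 ≤ k) (x : Fin (2 * k + 1) → Bool) (t v : ℕ)
    (ht : t < k * (k + 1)) (hv : v < 2 * k)
    (hm : t % k = v + 1 ∨ oddSeq k (t % (k + 1)) = v + 1) :
    Vt k hk x (t + 1) ⟨v + 1, by omega⟩ = Vt k hk x t ⟨v, by omega⟩ := by
  rw [Vt_succ k hk x t ht]
  unfold upd
  rw [if_pos]
  · unfold posCycle
    congr 1
    apply Fin.ext
    show (v + 1 + (2 * k + 1) - 1) % (2 * k + 1) = v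
    exact qmod (2 * k + 1) 1 v _ (by omega) (by omega)
  · rw [mem_blk]
    rcases hm with h | h
    · exact Or.inl h.symm
    · exact Or.inr h.symm

lemma step0 (k : ℕ) (hk : 2 ≤ k) (x : Fin (2 * k + 1) → Bool) (t : ℕ)
    (ht : t < k * (k + 1)) (hm : t % k = 0) :
    Vt k hk x (t + 1) ⟨0, by omega⟩ = Vt k hk x t ⟨2 * k, by omega⟩ := by
  rw [Vt_succ k hk x t ht]
  unfold upd
  rw [if_pos]
  · unfold posCycle
    congr 1
    apply Fin.ext
    show (0 + (2 * k + 1) - 1) % (2 * k + 1) = 2 * k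
    rw [Nat.mod_eq_of_lt (by omega)]
    omega
  · rw [mem_blk]
    exact Or.inl hm.symm

lemma stepNot (k : ℕ) (hk : 2 ≤ k) (x : Fin (2 * k + 1) → Bool) (t v : ℕ)
    (ht : t < k * (k + 1)) (hv : v < 2 * k + 1)
    (h1 : t % k ≠ v) (h2 : oddSeq k (t % (k + 1)) ≠ v) :
    Vt k hk x (t + 1) ⟨v, hv⟩ = Vt k hk x t ⟨v, hv⟩ := by
  rw [Vt_succ k hk x t ht]
  unfold upd
  rw [if_neg]
  rw [mem_blk]
  push_neg
  exact ⟨fun h => h1 h.symm, fun h => h2 h.symm⟩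

lemma stay (k : ℕ) (hk : 2 ≤ k) (x : Fin (2 * k + 1) → Bool) (a v : ℕ)
    (hv : v < 2 * k + 1) :
    ∀ b, b ≤ k * (k + 1) → a ≤ b →
      (∀ s, a ≤ s → s < b → s % k ≠ v ∧ oddSeq k (s % (k + 1)) ≠ v) →
      Vt k hk x b ⟨v, hv⟩ = Vt k hk x a ⟨v, hv⟩ := by
  intro b
  induction b with
  | zero =>
    intro _ hab _
    have : a = 0 := by omega
    rw [this]
  | succ n ih =>
    intro hb hab h
    rcases Nat.lt_or_ge a (n + 1) with h' | h'
    · have ha : a ≤ n := by omega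
      have hn := h n ha (by omega)
      rw [stepNot k hk x n v (by omega) hv hn.1 hn.2]
      exact ih (by omega) ha (fun s hs1 hs2 => h s hs1 (by omega))
    · have : a = n + 1 := by omega
      rw [this]

lemma oddSeq_ne_big {k m v : ℕ} (hk : 2 ≤ k) (hm : m ≤ k) (hv1 : k + 2 ≤ v)
    (hv2 : v ≤ 2 * k) (h : m ≠ 2 * k + 2 - v) : oddSeq k m ≠ v := fun he => by
  rcases oddSeq_inv hm hk he with ⟨h1, _⟩ | ⟨h1, _⟩ | ⟨_, _, h3⟩ <;> omega

lemma oddSeq_ne_k {k m : ℕ} (hk : 2 ≤ k) (hm : m ≤ k) (h : m ≠ 0) : oddSeq k m ≠ k :=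
  fun he => by rcases oddSeq_inv hm hk he with ⟨h1, h2⟩ | ⟨h1, _⟩ | ⟨h1, _, _⟩ <;> omega

lemma oddSeq_ne_k1 {k m : ℕ} (hk : 2 ≤ k) (hm : m ≤ k) (h : m ≠ 1) : oddSeq k m ≠ k + 1 :=
  fun he => by rcases oddSeq_inv hm hk he with ⟨h1, _⟩ | ⟨h1, h2⟩ | ⟨h1, _, _⟩ <;> omega

lemma stay_lo (k : ℕ) (hk : 2 ≤ k) (x : Fin (2 * k + 1) → Bool) (a b v : ℕ)
    (hv : v < k) (hb : b ≤ k * (k + 1)) (hab : a ≤ b) (u : ℕ)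
    (hu : u % k = v) (hub : b ≤ u + k) (hua : u < a) :
    Vt k hk x b ⟨v, by omega⟩ = Vt k hk x a ⟨v, by omega⟩ := by
  apply stay k hk x a v (by omega) b hb hab
  intro s h1 h2
  constructor
  · exact no_between hu hub hua s h1 h2
  · have := oddSeq_ge (k := k) (m := s % (k + 1)) (by have := Nat.mod_lt s (show 0 < k + 1 by omega); omega)
    omega

lemma stay_k (k : ℕ) (hk : 2 ≤ k) (x : Fin (2 * k + 1) → Bool) (a b : ℕ)
    (hb : b ≤ k * (k + 1)) (hab : a ≤ b) (u : ℕ)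
    (hu : u % (k + 1) = 0) (hub : b ≤ u + (k + 1)) (hua : u < a) :
    Vt k hk x b ⟨k, by omega⟩ = Vt k hk x a ⟨k, by omega⟩ := by
  apply stay k hk x a k (by omega) b hb hab
  intro s h1 h2
  constructor
  · have := Nat.mod_lt s (show 0 < k by omega); omega
  · exact oddSeq_ne_k hk (by have := Nat.mod_lt s (show 0 < k + 1 by omega); omega)
      (no_between hu hub hua s h1 h2)

lemma stay_k1 (k : ℕ) (hk : 2 ≤ k) (x : Fin (2 * k + 1) → Bool) (a b : ℕ)
    (hb : b ≤ k * (k + 1)) (hab : a ≤ b) (u : ℕ)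
    (hu : u % (k + 1) = 1) (hub : b ≤ u + (k + 1)) (hua : u < a) :
    Vt k hk x b ⟨k + 1, by omega⟩ = Vt k hk x a ⟨k + 1, by omega⟩ := by
  apply stay k hk x a (k + 1) (by omega) b hb hab
  intro s h1 h2
  constructor
  · have := Nat.mod_lt s (show 0 < k by omega); omega
  · exact oddSeq_ne_k1 hk (by have := Nat.mod_lt s (show 0 < k + 1 by omega); omega)
      (no_between hu hub hua s h1 h2)

lemma stay_big (k : ℕ) (hk : 2 ≤ k) (x : Fin (2 * k + 1) → Bool) (a b v : ℕ)
    (hv1 : k + 2 ≤ v) (hv2 : v ≤ 2 * k) (hb : b ≤ k * (k + 1)) (hab : a ≤ b) (u : ℕ)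
    (hu : u % (k + 1) = 2 * k + 2 - v) (hub : b ≤ u + (k + 1)) (hua : u < a) :
    Vt k hk x b ⟨v, by omega⟩ = Vt k hk x a ⟨v, by omega⟩ := by
  apply stay k hk x a v (by omega) b hb hab
  intro s h1 h2
  constructor
  · have := Nat.mod_lt s (show 0 < k by omega); omega
  · exact oddSeq_ne_big hk (by have := Nat.mod_lt s (show 0 < k + 1 by omega); omega)
      hv1 hv2 (no_between hu hub hua s h1 h2)

lemma stay_big0 (k : ℕ) (hk : 2 ≤ k) (x : Fin (2 * k + 1) → Bool) (b v : ℕ)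
    (hv1 : k + 2 ≤ v) (hv2 : v ≤ 2 * k) (hb : b ≤ 2 * k + 2 - v) :
    Vt k hk x b ⟨v, by omega⟩ = x ⟨v, by omega⟩ := by
  have hkk : k ≤ k * (k + 1) := Nat.le_mul_of_pos_right k (by omega)
  have h0 : Vt k hk x b ⟨v, by omega⟩ = Vt k hk x 0 ⟨v, by omega⟩ := by
    apply stay k hk x 0 v (by omega) b (by omega) (by omega)
    intro s h1 h2
    constructor
    · have := Nat.mod_lt s (show 0 < k by omega); omega
    · have hs : s % (k + 1) = s := Nat.mod_eq_of_lt (by omega)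
      rw [hs]
      exact oddSeq_ne_big hk (by omega) hv1 hv2 (by omega)
  rw [h0, Vt_zero]

lemma chainF (k : ℕ) (hk : 2 ≤ k) (x : Fin (2 * k + 1) → Bool) (b : ℕ) (hb : b % k = 0) :
    ∀ c (hc : c < k) (hbc : b + c < k * (k + 1)),
      Vt k hk x (b + c + 1) ⟨c, by omega⟩ = Vt k hk x b ⟨2 * k, by omega⟩ := by
  intro c
  induction c with
  | zero =>
    intro hc hbc
    exact step0 k hk x b (by omega) hb
  | succ c ih =>
    intro hc hbc
    obtain ⟨q, rfl⟩ : ∃ q, b = k * q := Nat.dvd_of_mod_eq_zero hb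
    have hmod : (k * q + c + 1) % k = c + 1 := by
      refine qmod k q (c + 1) _ ?_ (by omega)
      have : q * k = k * q := by ring
      omega
    have e1 : Vt k hk x (k * q + c + 1 + 1) ⟨c + 1, by omega⟩
        = Vt k hk x (k * q + c + 1) ⟨c, by omega⟩ :=
      stepMem k hk x (k * q + c + 1) c (by omega) (by omega) (Or.inl hmod)
    calc Vt k hk x (k * q + (c + 1) + 1) ⟨c + 1, by omega⟩
        = Vt k hk x (k * q + c + 1) ⟨c, by omega⟩ := e1
      _ = Vt k hk x (k * q) ⟨2 * k, by omega⟩ := ih (by omega) (by omega)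

lemma chainC (k : ℕ) (hk : 2 ≤ k) (x : Fin (2 * k + 1) → Bool) (a p : ℕ)
    (hp : p ≤ 2 * k) (ha : a % (k + 1) = 2 * k + 2 - p) (hal : a < k * (k + 1)) :
    ∀ c (hc1 : k + 2 ≤ p - c) (hc2 : c * k ≤ a),
      Vt k hk x (a + 1) ⟨p, by omega⟩ = Vt k hk x (a - c * k + 1) ⟨p - c, by omega⟩ := by
  intro c
  induction c with
  | zero =>
    intro h1 h2
    simp
  | succ c ih =>
    intro h1 h2
    have hck : (c + 1) * k = c * k + k := by ring
    have h1' : k + 2 ≤ p - c := by omega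
    have h2' : c * k ≤ a := by omega
    rw [ih h1' h2']
    -- residue of a + c and a - c*k
    have hrc : (a + c) % (k + 1) = 2 * k + 2 - p + c := by
      have hq := Nat.div_add_mod a (k + 1)
      rw [ha] at hq
      refine qmod (k + 1) (a / (k + 1)) (2 * k + 2 - p + c) _ ?_ (by omega)
      have : a / (k + 1) * (k + 1) = (k + 1) * (a / (k + 1)) := by ring
      omega
    have hmac : (a - c * k) % (k + 1) = 2 * k + 2 - p + c := by
      have hckk : c * (k + 1) = c * k + c := by ring
      have e : a - c * k + c * (k + 1) = a + c := by omega
      calc (a - c * k) % (k + 1) = (a - c * k + c * (k + 1)) % (k + 1) :=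
            (Nat.add_mul_mod_self_right _ _ _).symm
        _ = 2 * k + 2 - p + c := by rw [e]; exact hrc
    have hos : oddSeq k ((a - c * k) % (k + 1)) = (p - (c + 1)) + 1 := by
      rw [hmac, oddSeq_two k _ (by omega) (by omega)]
      omega
    have hstep : Vt k hk x (a - c * k + 1) ⟨p - (c + 1) + 1, by omega⟩
        = Vt k hk x (a - c * k) ⟨p - (c + 1), by omega⟩ :=
      stepMem k hk x (a - c * k) (p - (c + 1)) (by omega) (by omega) (Or.inr hos)
    have hfin : (⟨p - c, by omega⟩ : Fin (2 * k + 1)) = ⟨p - (c + 1) + 1, by omega⟩ :=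
      Fin.ext (by show p - c = p - (c + 1) + 1; omega)
    rw [hfin, hstep]
    -- stay for cell p - (c+1) from a - (c+1)*k + 1 to a - c*k
    have hu2 : (a - (c + 1) * k) % (k + 1) = 2 * k + 2 - (p - (c + 1)) := by
      have hckk : (c + 1) * (k + 1) = (c + 1) * k + (c + 1) := by ring
      have e : a - (c + 1) * k + (c + 1) * (k + 1) = a + (c + 1) := by omega
      have hrc2 : (a + (c + 1)) % (k + 1) = 2 * k + 2 - p + (c + 1) := by
        have hq := Nat.div_add_mod a (k + 1)
        rw [ha] at hq
        refine qmod (k + 1) (a / (k + 1)) (2 * k + 2 - p + (c + 1)) _ ?_ (by omega)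
        have : a / (k + 1) * (k + 1) = (k + 1) * (a / (k + 1)) := by ring
        omega
      have hu2' : (a - (c + 1) * k) % (k + 1) = 2 * k + 2 - p + (c + 1) := by
        calc (a - (c + 1) * k) % (k + 1)
            = (a - (c + 1) * k + (c + 1) * (k + 1)) % (k + 1) :=
              (Nat.add_mul_mod_self_right _ _ _).symm
          _ = 2 * k + 2 - p + (c + 1) := by rw [e]; exact hrc2
      rw [hu2']
      omega
    exact stay_big k hk x (a - (c + 1) * k + 1) (a - c * k) (p - (c + 1))
      (by omega) (by omega) (by omega) (by omega) (a - (c + 1) * k)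
      hu2 (by omega) (by omega)

lemma Vt_congr (k : ℕ) (hk : 2 ≤ k) (x : Fin (2 * k + 1) → Bool) (t t' v v' : ℕ)
    (hv : v < 2 * k + 1) (hv' : v' < 2 * k + 1) (ht : t = t') (hvv : v = v') :
    Vt k hk x t ⟨v, hv⟩ = Vt k hk x t' ⟨v', hv'⟩ := by
  subst ht; subst hvv; rfl


lemma Vt_full (k : ℕ) (hk : 2 ≤ k) (x : Fin (2 * k + 1) → Bool) :
    run (posCycle (2 * k + 1)) (oddBlocks k hk) x = Vt k hk x (k * (k + 1)) := by
  unfold Vt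
  rw [List.take_of_length_le]
  rw [oddBlocks_eq]
  simp

attribute [irreducible] Vt blk oddBlocks run upd posCycle oddSeq


set_option maxHeartbeats 1000000 in
lemma midA (I : ℕ) (hk : 2 ≤ I + 4) (x : Fin (2 * (I + 4) + 1) → Bool) :
    Vt (I + 4) hk x (I * I + 6 * I + 7) ⟨2 * I + 7, by omega⟩ = x ⟨I + 6, by omega⟩ := by
  have g1 : (I + 1) * (I + 1) = I * I + 2 * I + 1 := by ring
  have g2 : I * (I + 5) = I * I + 5 * I := by ring
  have g3 : I * (I + 4) = I * I + 4 * I := by ring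
  have g4 : (I + 4) * (I + 4) = I * I + 8 * I + 16 := by ring
  have g5 : (I + 4) * ((I + 4) + 1) = I * I + 9 * I + 20 := by ring
  have h7 : Vt (I + 4) hk x (I * I + 6 * I + 7) ⟨2 * I + 7, by omega⟩
      = Vt (I + 4) hk x (I * I + 5 * I + 4) ⟨2 * I + 7, by omega⟩ :=
    stay_big (I + 4) hk x (I * I + 5 * I + 4) (I * I + 6 * I + 7) (2 * I + 7)
      (by omega) (by omega) (by omega) (by omega) (I * I + 5 * I + 3)
      (by rw [qmod (I + 5) I 3 _ (by omega) (by omega)]; omega) (by omega) (by omega)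
  have h8 : Vt (I + 4) hk x (I * I + 5 * I + 3 + 1) ⟨2 * I + 7, by omega⟩
      = Vt (I + 4) hk x (I * I + 5 * I + 3 - I * (I + 4) + 1) ⟨2 * I + 7 - I, by omega⟩ :=
    chainC (I + 4) hk x (I * I + 5 * I + 3) (2 * I + 7) (by omega)
      (by rw [qmod (I + 5) I 3 _ (by omega) (by omega)]; omega) (by omega)
      I (by omega) (by omega)
  have h9 : Vt (I + 4) hk x (I + 3 + 1) ⟨(I + 6) + 1, by omega⟩
      = Vt (I + 4) hk x (I + 3) ⟨I + 6, by omega⟩ := by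
    apply stepMem (I + 4) hk x (I + 3) (I + 6) (by omega) (by omega)
    refine Or.inr ?_
    rw [qmod (I + 5) 0 (I + 3) _ (by omega) (by omega),
      oddSeq_two _ _ (by omega) (by omega)]
    omega
  have h10 : Vt (I + 4) hk x (I + 3) ⟨I + 6, by omega⟩ = x ⟨I + 6, by omega⟩ :=
    stay_big0 (I + 4) hk x (I + 3) (I + 6) (by omega) (by omega) (by omega)
  calc Vt (I + 4) hk x (I * I + 6 * I + 7) ⟨2 * I + 7, by omega⟩
      = Vt (I + 4) hk x (I * I + 5 * I + 4) ⟨2 * I + 7, by omega⟩ := h7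
    _ = Vt (I + 4) hk x (I * I + 5 * I + 3 + 1) ⟨2 * I + 7, by omega⟩ :=
        Vt_congr _ hk x _ _ _ _ (by omega) (by omega) (by omega) (by omega)
    _ = Vt (I + 4) hk x (I * I + 5 * I + 3 - I * (I + 4) + 1) ⟨2 * I + 7 - I, by omega⟩ := h8
    _ = Vt (I + 4) hk x (I + 3 + 1) ⟨(I + 6) + 1, by omega⟩ :=
        Vt_congr _ hk x _ _ _ _ (by omega) (by omega) (by omega) (by omega)
    _ = Vt (I + 4) hk x (I + 3) ⟨I + 6, by omega⟩ := h9
    _ = x ⟨I + 6, by omega⟩ := h10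

set_option maxHeartbeats 1000000 in
lemma midB (J : ℕ) (hk : 2 ≤ J + 3) (x : Fin (2 * (J + 3) + 1) → Bool) :
    Vt (J + 3) hk x (J * J + 4 * J + 2) ⟨2 * J + 5, by omega⟩ = x ⟨J + 5, by omega⟩ := by
  rcases J with _ | I
  · exact stay_big0 3 hk x 2 5 (by omega) (by omega) (by omega)
  · have g1 : (I + 1) * (I + 1) = I * I + 2 * I + 1 := by ring
    calc Vt (I + 1 + 3) hk x ((I + 1) * (I + 1) + 4 * (I + 1) + 2) ⟨2 * (I + 1) + 5, by omega⟩
        = Vt (I + 4) hk x (I * I + 6 * I + 7) ⟨2 * I + 7, by omega⟩ :=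
          Vt_congr _ hk x _ _ _ _ (by omega) (by omega) (by omega) (by omega)
      _ = x ⟨I + 6, by omega⟩ := midA I hk x

set_option maxHeartbeats 1000000 in
lemma midC (K : ℕ) (hk : 2 ≤ K + 2) (x : Fin (2 * (K + 2) + 1) → Bool) :
    Vt (K + 2) hk x (K * K + 2 * K) ⟨2 * (K + 2), by omega⟩ = x ⟨K + 4, by omega⟩ := by
  rcases K with _ | J
  · show Vt 2 hk x 0 ⟨4, by omega⟩ = x ⟨4, by omega⟩
    rw [Vt_zero]
  · have f1 : (J + 1) * (J + 1) = J * J + 2 * J + 1 := by ring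
    have f2 : J * (J + 4) = J * J + 4 * J := by ring
    have f3 : (J + 3) * (J + 3) = J * J + 6 * J + 9 := by ring
    have f4 : (J + 3) * ((J + 3) + 1) = J * J + 7 * J + 12 := by ring
    have h5 : Vt (J + 3) hk x (J * J + 4 * J + 2 + 1) ⟨(2 * J + 5) + 1, by omega⟩
        = Vt (J + 3) hk x (J * J + 4 * J + 2) ⟨2 * J + 5, by omega⟩ := by
      apply stepMem (J + 3) hk x (J * J + 4 * J + 2) (2 * J + 5) (by omega) (by omega)
      refine Or.inr ?_
      rw [qmod (J + 4) J 2 _ (by omega) (by omega), oddSeq_two _ _ (by omega) (by omega)]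
      try omega
    calc Vt (J + 1 + 2) hk x ((J + 1) * (J + 1) + 2 * (J + 1)) ⟨2 * (J + 1 + 2), by omega⟩
        = Vt (J + 3) hk x (J * J + 4 * J + 2 + 1) ⟨(2 * J + 5) + 1, by omega⟩ :=
          Vt_congr _ hk x _ _ _ _ (by omega) (by omega) (by omega) (by omega)
      _ = Vt (J + 3) hk x (J * J + 4 * J + 2) ⟨2 * J + 5, by omega⟩ := h5
      _ = x ⟨J + 1 + 4, by omega⟩ := midB J hk x

set_option maxHeartbeats 1000000 in
lemma midchain (k : ℕ) (hk : 2 ≤ k) (x : Fin (2 * k + 1) → Bool) :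
    Vt k hk x (k * k) ⟨k, by linarith⟩ = x ⟨k + 2, by linarith⟩ := by
  obtain ⟨K, rfl⟩ : ∃ K, k = K + 2 := ⟨k - 2, by omega⟩
  have e1 : (K + 2) * (K + 2) = K * K + 4 * K + 4 := by ring
  have e2 : (K + 2) * ((K + 2) + 1) = K * K + 5 * K + 6 := by ring
  have e3 : (K + 1) * (K + 3) = K * K + 4 * K + 3 := by ring
  have e4 : K * (K + 2) = K * K + 2 * K := by ring
  have e5 : (K + 1) * (K + 2) = K * K + 3 * K + 2 := by ring
  have h1 : Vt (K + 2) hk x (K * K + 4 * K + 3 + 1) ⟨(K + 1) + 1, by omega⟩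
      = Vt (K + 2) hk x (K * K + 4 * K + 3) ⟨K + 1, by omega⟩ := by
    apply stepMem (K + 2) hk x (K * K + 4 * K + 3) (K + 1) (by omega) (by omega)
    refine Or.inr ?_
    rw [qmod (K + 3) (K + 1) 0 _ (by omega) (by omega), oddSeq_zero]
  have h2 : Vt (K + 2) hk x (K * K + 4 * K + 3) ⟨K + 1, by omega⟩
      = Vt (K + 2) hk x (K * K + 3 * K + 2) ⟨K + 1, by omega⟩ :=
    stay_lo (K + 2) hk x (K * K + 3 * K + 2) (K * K + 4 * K + 3) (K + 1) (by omega)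
      (by omega) (by omega) (K * K + 3 * K + 1)
      (qmod (K + 2) K (K + 1) _ (by omega) (by omega)) (by omega) (by omega)
  have h3 : Vt (K + 2) hk x (K * K + 2 * K + (K + 1) + 1) ⟨K + 1, by omega⟩
      = Vt (K + 2) hk x (K * K + 2 * K) ⟨2 * (K + 2), by omega⟩ :=
    chainF (K + 2) hk x (K * K + 2 * K) (qmod (K + 2) K 0 _ (by omega) (by omega))
      (K + 1) (by omega) (by omega)
  calc Vt (K + 2) hk x ((K + 2) * (K + 2)) ⟨K + 2, by omega⟩
      = Vt (K + 2) hk x (K * K + 4 * K + 3 + 1) ⟨(K + 1) + 1, by omega⟩ :=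
        Vt_congr _ hk x _ _ _ _ (by omega) (by omega) (by omega) (by omega)
    _ = Vt (K + 2) hk x (K * K + 4 * K + 3) ⟨K + 1, by omega⟩ := h1
    _ = Vt (K + 2) hk x (K * K + 3 * K + 2) ⟨K + 1, by omega⟩ := h2
    _ = Vt (K + 2) hk x (K * K + 2 * K + (K + 1) + 1) ⟨K + 1, by omega⟩ :=
        Vt_congr _ hk x _ _ _ _ (by omega) (by omega) (by omega) (by omega)
    _ = Vt (K + 2) hk x (K * K + 2 * K) ⟨2 * (K + 2), by omega⟩ := h3
    _ = x ⟨K + 2 + 2, by omega⟩ := midC K hk x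

lemma xcg (k : ℕ) (x : Fin (2 * k + 1) → Bool) (a b : ℕ) (ha : a < 2 * k + 1)
    (hb : b < 2 * k + 1) (h : a = b) : x ⟨a, ha⟩ = x ⟨b, hb⟩ := by subst h; rfl

set_option maxHeartbeats 1000000 in
lemma tail1 (K : ℕ) (hk : 2 ≤ K + 2) (x : Fin (2 * (K + 2) + 1) → Bool) :
    Vt (K + 2) hk x (K * K + 4 * K + 4) ⟨2 * (K + 2), by omega⟩ = x ⟨K + 1, by omega⟩ := by
  have e2 : (K + 2) * ((K + 2) + 1) = K * K + 5 * K + 6 := by ring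
  have e4 : K * (K + 2) = K * K + 2 * K := by ring
  have e6 : K * (K + 3) = K * K + 3 * K := by ring
  have t1 : Vt (K + 2) hk x (K * K + 4 * K + 4) ⟨2 * (K + 2), by omega⟩
      = Vt (K + 2) hk x (K * K + 3 * K + 3) ⟨2 * (K + 2), by omega⟩ :=
    stay_big (K + 2) hk x (K * K + 3 * K + 3) (K * K + 4 * K + 4) (2 * (K + 2))
      (by omega) (by omega) (by omega) (by omega) (K * K + 3 * K + 2)
      (by rw [qmod (K + 3) K 2 _ (by omega) (by omega)]; omega) (by omega) (by omega)
  have t2 : Vt (K + 2) hk x (K * K + 3 * K + 2 + 1) ⟨2 * (K + 2), by omega⟩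
      = Vt (K + 2) hk x (K * K + 3 * K + 2 - K * (K + 2) + 1) ⟨2 * (K + 2) - K, by omega⟩ :=
    chainC (K + 2) hk x (K * K + 3 * K + 2) (2 * (K + 2)) (by omega)
      (by rw [qmod (K + 3) K 2 _ (by omega) (by omega)]; omega) (by omega)
      K (by omega) (by omega)
  have t3 : Vt (K + 2) hk x (K + 2 + 1) ⟨(K + 3) + 1, by omega⟩
      = Vt (K + 2) hk x (K + 2) ⟨K + 3, by omega⟩ := by
    apply stepMem (K + 2) hk x (K + 2) (K + 3) (by omega) (by omega)
    refine Or.inr ?_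
    rw [qmod (K + 3) 0 (K + 2) _ (by omega) (by omega), oddSeq_two _ _ (by omega) (by omega)]
    try omega
  have t4 : Vt (K + 2) hk x (K + 2) ⟨(K + 2) + 1, by omega⟩
      = Vt (K + 2) hk x 2 ⟨(K + 2) + 1, by omega⟩ :=
    stay_k1 (K + 2) hk x 2 (K + 2) (by omega) (by omega) 1
      (qmod (K + 3) 0 1 _ (by omega) (by omega)) (by omega) (by omega)
  have t5 : Vt (K + 2) hk x (1 + 1) ⟨(K + 2) + 1, by omega⟩
      = Vt (K + 2) hk x 1 ⟨K + 2, by omega⟩ := by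
    apply stepMem (K + 2) hk x 1 (K + 2) (by omega) (by omega)
    refine Or.inr ?_
    rw [qmod (K + 3) 0 1 _ (by omega) (by omega), oddSeq_one]
  have t6 : Vt (K + 2) hk x (0 + 1) ⟨(K + 1) + 1, by omega⟩
      = Vt (K + 2) hk x 0 ⟨K + 1, by omega⟩ := by
    apply stepMem (K + 2) hk x 0 (K + 1) (by omega) (by omega)
    refine Or.inr ?_
    rw [qmod (K + 3) 0 0 _ (by omega) (by omega), oddSeq_zero]
  calc Vt (K + 2) hk x (K * K + 4 * K + 4) ⟨2 * (K + 2), by omega⟩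
      = Vt (K + 2) hk x (K * K + 3 * K + 3) ⟨2 * (K + 2), by omega⟩ := t1
    _ = Vt (K + 2) hk x (K * K + 3 * K + 2 + 1) ⟨2 * (K + 2), by omega⟩ :=
        Vt_congr _ hk x _ _ _ _ (by omega) (by omega) (by omega) (by omega)
    _ = Vt (K + 2) hk x (K * K + 3 * K + 2 - K * (K + 2) + 1) ⟨2 * (K + 2) - K, by omega⟩ := t2
    _ = Vt (K + 2) hk x (K + 2 + 1) ⟨(K + 3) + 1, by omega⟩ :=
        Vt_congr _ hk x _ _ _ _ (by omega) (by omega) (by omega) (by omega)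
    _ = Vt (K + 2) hk x (K + 2) ⟨K + 3, by omega⟩ := t3
    _ = Vt (K + 2) hk x 2 ⟨(K + 2) + 1, by omega⟩ := t4
    _ = Vt (K + 2) hk x (1 + 1) ⟨(K + 2) + 1, by omega⟩ :=
        Vt_congr _ hk x _ _ _ _ (by omega) (by omega) (by omega) (by omega)
    _ = Vt (K + 2) hk x 1 ⟨K + 2, by omega⟩ := t5
    _ = Vt (K + 2) hk x (0 + 1) ⟨(K + 1) + 1, by omega⟩ :=
        Vt_congr _ hk x _ _ _ _ (by omega) (by omega) (by omega) (by omega)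
    _ = Vt (K + 2) hk x 0 ⟨K + 1, by omega⟩ := t6
    _ = x ⟨K + 1, by omega⟩ := by rw [Vt_zero]

set_option maxHeartbeats 1000000 in
lemma goal1 (k : ℕ) (hk : 2 ≤ k) (x : Fin (2 * k + 1) → Bool) (v : ℕ) (hv : v < k) :
    Vt k hk x (k * (k + 1)) ⟨v, by omega⟩ = x ⟨k - 1, by omega⟩ := by
  obtain ⟨K, rfl⟩ : ∃ K, k = K + 2 := ⟨k - 2, by omega⟩
  have e1 : (K + 2) * (K + 2) = K * K + 4 * K + 4 := by ring
  have e2 : (K + 2) * ((K + 2) + 1) = K * K + 5 * K + 6 := by ring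
  have p1 : Vt (K + 2) hk x ((K + 2) * ((K + 2) + 1)) ⟨v, by omega⟩
      = Vt (K + 2) hk x (K * K + 4 * K + 5 + v) ⟨v, by omega⟩ :=
    stay_lo (K + 2) hk x (K * K + 4 * K + 5 + v) ((K + 2) * ((K + 2) + 1)) v (by omega)
      (by omega) (by omega) (K * K + 4 * K + 4 + v)
      (qmod (K + 2) (K + 2) v _ (by omega) (by omega)) (by omega) (by omega)
  have p2 : Vt (K + 2) hk x (K * K + 4 * K + 4 + v + 1) ⟨v, by omega⟩
      = Vt (K + 2) hk x (K * K + 4 * K + 4) ⟨2 * (K + 2), by omega⟩ :=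
    chainF (K + 2) hk x (K * K + 4 * K + 4)
      (qmod (K + 2) (K + 2) 0 _ (by omega) (by omega)) v (by omega) (by omega)
  calc Vt (K + 2) hk x ((K + 2) * ((K + 2) + 1)) ⟨v, by omega⟩
      = Vt (K + 2) hk x (K * K + 4 * K + 5 + v) ⟨v, by omega⟩ := p1
    _ = Vt (K + 2) hk x (K * K + 4 * K + 4 + v + 1) ⟨v, by omega⟩ :=
        Vt_congr _ hk x _ _ _ _ (by omega) (by omega) (by omega) (by omega)
    _ = Vt (K + 2) hk x (K * K + 4 * K + 4) ⟨2 * (K + 2), by omega⟩ := p2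
    _ = x ⟨K + 1, by omega⟩ := tail1 K hk x
    _ = x ⟨K + 2 - 1, by omega⟩ := xcg _ x _ _ _ _ (by omega)

set_option maxHeartbeats 1000000 in
lemma goal2 (k : ℕ) (hk : 2 ≤ k) (x : Fin (2 * k + 1) → Bool) :
    Vt k hk x (k * (k + 1)) ⟨k, by linarith⟩ = x ⟨k + 2, by linarith⟩ := by
  obtain ⟨K, rfl⟩ : ∃ K, k = K + 2 := ⟨k - 2, by omega⟩
  have e1 : (K + 2) * (K + 2) = K * K + 4 * K + 4 := by ring
  have e2 : (K + 2) * ((K + 2) + 1) = K * K + 5 * K + 6 := by ring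
  have e3 : (K + 1) * (K + 3) = K * K + 4 * K + 3 := by ring
  have q1 : Vt (K + 2) hk x ((K + 2) * ((K + 2) + 1)) ⟨K + 2, by omega⟩
      = Vt (K + 2) hk x (K * K + 4 * K + 4) ⟨K + 2, by omega⟩ :=
    stay_k (K + 2) hk x (K * K + 4 * K + 4) ((K + 2) * ((K + 2) + 1)) (by omega)
      (by omega) (K * K + 4 * K + 3)
      (qmod (K + 3) (K + 1) 0 _ (by omega) (by omega)) (by omega) (by omega)
  calc Vt (K + 2) hk x ((K + 2) * ((K + 2) + 1)) ⟨K + 2, by omega⟩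
      = Vt (K + 2) hk x (K * K + 4 * K + 4) ⟨K + 2, by omega⟩ := q1
    _ = Vt (K + 2) hk x ((K + 2) * (K + 2)) ⟨K + 2, by omega⟩ :=
        Vt_congr _ hk x _ _ _ _ (by omega) (by omega) (by omega) (by omega)
    _ = x ⟨K + 2 + 2, by omega⟩ := midchain (K + 2) hk x

set_option maxHeartbeats 1000000 in
lemma tail3 (K : ℕ) (hk : 2 ≤ K + 2) (x : Fin (2 * (K + 2) + 1) → Bool) :
    Vt (K + 2) hk x (K * K + 4 * K + 5) ⟨K + 3, by omega⟩ = x ⟨K + 4, by omega⟩ := by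
  have e1 : (K + 2) * (K + 2) = K * K + 4 * K + 4 := by ring
  have e2 : (K + 2) * ((K + 2) + 1) = K * K + 5 * K + 6 := by ring
  have e3 : (K + 1) * (K + 3) = K * K + 4 * K + 3 := by ring
  have r1 : Vt (K + 2) hk x (K * K + 4 * K + 4 + 1) ⟨(K + 2) + 1, by omega⟩
      = Vt (K + 2) hk x (K * K + 4 * K + 4) ⟨K + 2, by omega⟩ := by
    apply stepMem (K + 2) hk x (K * K + 4 * K + 4) (K + 2) (by omega) (by omega)
    refine Or.inr ?_
    rw [qmod (K + 3) (K + 1) 1 _ (by omega) (by omega), oddSeq_one]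
  calc Vt (K + 2) hk x (K * K + 4 * K + 5) ⟨K + 3, by omega⟩
      = Vt (K + 2) hk x (K * K + 4 * K + 4 + 1) ⟨(K + 2) + 1, by omega⟩ :=
        Vt_congr _ hk x _ _ _ _ (by omega) (by omega) (by omega) (by omega)
    _ = Vt (K + 2) hk x (K * K + 4 * K + 4) ⟨K + 2, by omega⟩ := r1
    _ = Vt (K + 2) hk x ((K + 2) * (K + 2)) ⟨K + 2, by omega⟩ :=
        Vt_congr _ hk x _ _ _ _ (by omega) (by omega) (by omega) (by omega)
    _ = x ⟨K + 4, by omega⟩ := midchain (K + 2) hk x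

set_option maxHeartbeats 1000000 in
lemma goal3 (k : ℕ) (hk : 2 ≤ k) (x : Fin (2 * k + 1) → Bool) :
    Vt k hk x (k * (k + 1)) ⟨k + 1, by linarith⟩ = x ⟨k + 2, by linarith⟩ := by
  obtain ⟨K, rfl⟩ : ∃ K, k = K + 2 := ⟨k - 2, by omega⟩
  have e2 : (K + 2) * ((K + 2) + 1) = K * K + 5 * K + 6 := by ring
  have e3 : (K + 1) * (K + 3) = K * K + 4 * K + 3 := by ring
  have s1 : Vt (K + 2) hk x ((K + 2) * ((K + 2) + 1)) ⟨(K + 2) + 1, by omega⟩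
      = Vt (K + 2) hk x (K * K + 4 * K + 5) ⟨(K + 2) + 1, by omega⟩ :=
    stay_k1 (K + 2) hk x (K * K + 4 * K + 5) ((K + 2) * ((K + 2) + 1)) (by omega)
      (by omega) (K * K + 4 * K + 4)
      (qmod (K + 3) (K + 1) 1 _ (by omega) (by omega)) (by omega) (by omega)
  calc Vt (K + 2) hk x ((K + 2) * ((K + 2) + 1)) ⟨(K + 2) + 1, by omega⟩
      = Vt (K + 2) hk x (K * K + 4 * K + 5) ⟨(K + 2) + 1, by omega⟩ := s1
    _ = x ⟨K + 4, by omega⟩ := tail3 K hk x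
    _ = x ⟨K + 2 + 2, by omega⟩ := xcg _ x _ _ _ _ (by omega)

set_option maxHeartbeats 1000000 in
lemma goal4a (k : ℕ) (hk : 2 ≤ k) (x : Fin (2 * k + 1) → Bool) :
    Vt k hk x (k * (k + 1)) ⟨k + 2, by linarith⟩ = x ⟨k + 2, by linarith⟩ := by
  obtain ⟨K, rfl⟩ : ∃ K, k = K + 2 := ⟨k - 2, by omega⟩
  have e2 : (K + 2) * ((K + 2) + 1) = K * K + 5 * K + 6 := by ring
  have e3 : (K + 1) * (K + 3) = K * K + 4 * K + 3 := by ring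
  have u1 : Vt (K + 2) hk x (K * K + 5 * K + 5 + 1) ⟨(K + 3) + 1, by omega⟩
      = Vt (K + 2) hk x (K * K + 5 * K + 5) ⟨K + 3, by omega⟩ := by
    apply stepMem (K + 2) hk x (K * K + 5 * K + 5) (K + 3) (by omega) (by omega)
    refine Or.inr ?_
    rw [qmod (K + 3) (K + 1) (K + 2) _ (by omega) (by omega),
      oddSeq_two _ _ (by omega) (by omega)]
    try omega
  have u2 : Vt (K + 2) hk x (K * K + 5 * K + 5) ⟨(K + 2) + 1, by omega⟩
      = Vt (K + 2) hk x (K * K + 4 * K + 5) ⟨(K + 2) + 1, by omega⟩ :=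
    stay_k1 (K + 2) hk x (K * K + 4 * K + 5) (K * K + 5 * K + 5) (by omega)
      (by omega) (K * K + 4 * K + 4)
      (qmod (K + 3) (K + 1) 1 _ (by omega) (by omega)) (by omega) (by omega)
  calc Vt (K + 2) hk x ((K + 2) * ((K + 2) + 1)) ⟨K + 2 + 2, by omega⟩
      = Vt (K + 2) hk x (K * K + 5 * K + 5 + 1) ⟨(K + 3) + 1, by omega⟩ :=
        Vt_congr _ hk x _ _ _ _ (by omega) (by omega) (by omega) (by omega)
    _ = Vt (K + 2) hk x (K * K + 5 * K + 5) ⟨K + 3, by omega⟩ := u1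
    _ = Vt (K + 2) hk x (K * K + 4 * K + 5) ⟨(K + 2) + 1, by omega⟩ := u2
    _ = x ⟨K + 4, by omega⟩ := tail3 K hk x
    _ = x ⟨K + 2 + 2, by omega⟩ := xcg _ x _ _ _ _ (by omega)

set_option maxHeartbeats 1000000 in
lemma g4tail (K M2 : ℕ) (hM2 : M2 < K) (hk : 2 ≤ K + 2) (x : Fin (2 * (K + 2) + 1) → Bool) :
    Vt (K + 2) hk x (M2 * (K + 2)) ⟨2 * (K + 2), by omega⟩ = x ⟨2 * K + 4 - M2, by omega⟩ := by
  have e2 : (K + 2) * ((K + 2) + 1) = K * K + 5 * K + 6 := by ring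
  rcases M2 with _ | _ | N
  · calc Vt (K + 2) hk x (0 * (K + 2)) ⟨2 * (K + 2), by omega⟩
        = Vt (K + 2) hk x 0 ⟨2 * (K + 2), by omega⟩ :=
          Vt_congr _ hk x _ _ _ _ (by omega) (by omega) (by omega) (by omega)
      _ = x ⟨2 * K + 4 - 0, by omega⟩ := by
          rw [Vt_zero]
          try exact xcg _ x _ _ _ _ (by omega)
  · have sA : Vt (K + 2) hk x (K + 2) ⟨2 * (K + 2), by omega⟩
        = Vt (K + 2) hk x 3 ⟨2 * (K + 2), by omega⟩ :=
      stay_big (K + 2) hk x 3 (K + 2) (2 * (K + 2)) (by omega) (by omega) (by omega)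
        (by omega) 2 (by rw [qmod (K + 3) 0 2 _ (by omega) (by omega)]; omega)
        (by omega) (by omega)
    have sB : Vt (K + 2) hk x (2 + 1) ⟨(2 * K + 3) + 1, by omega⟩
        = Vt (K + 2) hk x 2 ⟨2 * K + 3, by omega⟩ := by
      apply stepMem (K + 2) hk x 2 (2 * K + 3) (by omega) (by omega)
      refine Or.inr ?_
      rw [qmod (K + 3) 0 2 _ (by omega) (by omega), oddSeq_two _ _ (by omega) (by omega)]
      omega
    have sC : Vt (K + 2) hk x 2 ⟨2 * K + 3, by omega⟩ = x ⟨2 * K + 3, by omega⟩ :=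
      stay_big0 (K + 2) hk x 2 (2 * K + 3) (by omega) (by omega) (by omega)
    calc Vt (K + 2) hk x (1 * (K + 2)) ⟨2 * (K + 2), by omega⟩
        = Vt (K + 2) hk x (K + 2) ⟨2 * (K + 2), by omega⟩ :=
          Vt_congr _ hk x _ _ _ _ (by omega) (by omega) (by omega) (by omega)
      _ = Vt (K + 2) hk x 3 ⟨2 * (K + 2), by omega⟩ := sA
      _ = Vt (K + 2) hk x (2 + 1) ⟨(2 * K + 3) + 1, by omega⟩ :=
          Vt_congr _ hk x _ _ _ _ (by omega) (by omega) (by omega) (by omega)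
      _ = Vt (K + 2) hk x 2 ⟨2 * K + 3, by omega⟩ := sB
      _ = x ⟨2 * K + 3, by omega⟩ := sC
      _ = x ⟨2 * K + 4 - 1, by omega⟩ := xcg _ x _ _ _ _ (by omega)
  · have EG : (N + 1 + 1) * (K + 2) = N * K + 2 * N + 2 * K + 4 := by ring
    have EB : (N + 1) * (K + 3) = N * K + 3 * N + K + 3 := by ring
    have EC : N * (K + 3) = N * K + 3 * N := by ring
    have ED : N * (K + 2) = N * K + 2 * N := by ring
    have EE : N * K + 3 * K ≤ K * K := by
      have h := Nat.mul_le_mul_right K (show N + 3 ≤ K by omega)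
      have : (N + 3) * K = N * K + 3 * K := by ring
      omega
    have sA : Vt (K + 2) hk x ((N + 1 + 1) * (K + 2)) ⟨2 * (K + 2), by omega⟩
        = Vt (K + 2) hk x ((N + 1) * (K + 3) + 3) ⟨2 * (K + 2), by omega⟩ :=
      stay_big (K + 2) hk x ((N + 1) * (K + 3) + 3) ((N + 1 + 1) * (K + 2)) (2 * (K + 2))
        (by omega) (by omega) (by omega) (by omega) ((N + 1) * (K + 3) + 2)
        (by rw [qmod (K + 3) (N + 1) 2 _ (by omega) (by omega)]; omega)
        (by omega) (by omega)
    have sB : Vt (K + 2) hk x ((N + 1) * (K + 3) + 2 + 1) ⟨(2 * K + 3) + 1, by omega⟩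
        = Vt (K + 2) hk x ((N + 1) * (K + 3) + 2) ⟨2 * K + 3, by omega⟩ := by
      apply stepMem (K + 2) hk x ((N + 1) * (K + 3) + 2) (2 * K + 3) (by omega) (by omega)
      refine Or.inr ?_
      rw [qmod (K + 3) (N + 1) 2 _ (by omega) (by omega), oddSeq_two _ _ (by omega) (by omega)]
      omega
    have sC : Vt (K + 2) hk x ((N + 1) * (K + 3) + 2) ⟨2 * K + 3, by omega⟩
        = Vt (K + 2) hk x (N * (K + 3) + 4) ⟨2 * K + 3, by omega⟩ :=
      stay_big (K + 2) hk x (N * (K + 3) + 4) ((N + 1) * (K + 3) + 2) (2 * K + 3)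
        (by omega) (by omega) (by omega) (by omega) (N * (K + 3) + 3)
        (by rw [qmod (K + 3) N 3 _ (by omega) (by omega)]; omega)
        (by omega) (by omega)
    have sD : Vt (K + 2) hk x (N * (K + 3) + 3 + 1) ⟨2 * K + 3, by omega⟩
        = Vt (K + 2) hk x (N * (K + 3) + 3 - N * (K + 2) + 1) ⟨2 * K + 3 - N, by omega⟩ :=
      chainC (K + 2) hk x (N * (K + 3) + 3) (2 * K + 3) (by omega)
        (by rw [qmod (K + 3) N 3 _ (by omega) (by omega)]; omega) (by omega)
        N (by omega) (by omega)
    have sE : Vt (K + 2) hk x (N + 3 + 1) ⟨(2 * K + 2 - N) + 1, by omega⟩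
        = Vt (K + 2) hk x (N + 3) ⟨2 * K + 2 - N, by omega⟩ := by
      apply stepMem (K + 2) hk x (N + 3) (2 * K + 2 - N) (by omega) (by omega)
      refine Or.inr ?_
      rw [qmod (K + 3) 0 (N + 3) _ (by omega) (by omega), oddSeq_two _ _ (by omega) (by omega)]
      omega
    have sF : Vt (K + 2) hk x (N + 3) ⟨2 * K + 2 - N, by omega⟩ = x ⟨2 * K + 2 - N, by omega⟩ :=
      stay_big0 (K + 2) hk x (N + 3) (2 * K + 2 - N) (by omega) (by omega) (by omega)
    calc Vt (K + 2) hk x ((N + 1 + 1) * (K + 2)) ⟨2 * (K + 2), by omega⟩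
        = Vt (K + 2) hk x ((N + 1) * (K + 3) + 3) ⟨2 * (K + 2), by omega⟩ := sA
      _ = Vt (K + 2) hk x ((N + 1) * (K + 3) + 2 + 1) ⟨(2 * K + 3) + 1, by omega⟩ :=
          Vt_congr _ hk x _ _ _ _ (by omega) (by omega) (by omega) (by omega)
      _ = Vt (K + 2) hk x ((N + 1) * (K + 3) + 2) ⟨2 * K + 3, by omega⟩ := sB
      _ = Vt (K + 2) hk x (N * (K + 3) + 4) ⟨2 * K + 3, by omega⟩ := sC
      _ = Vt (K + 2) hk x (N * (K + 3) + 3 + 1) ⟨2 * K + 3, by omega⟩ :=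
          Vt_congr _ hk x _ _ _ _ (by omega) (by omega) (by omega) (by omega)
      _ = Vt (K + 2) hk x (N * (K + 3) + 3 - N * (K + 2) + 1) ⟨2 * K + 3 - N, by omega⟩ := sD
      _ = Vt (K + 2) hk x (N + 3 + 1) ⟨(2 * K + 2 - N) + 1, by omega⟩ :=
          Vt_congr _ hk x _ _ _ _ (by omega) (by omega) (by omega) (by omega)
      _ = Vt (K + 2) hk x (N + 3) ⟨2 * K + 2 - N, by omega⟩ := sE
      _ = x ⟨2 * K + 2 - N, by omega⟩ := sF
      _ = x ⟨2 * K + 4 - (N + 1 + 1), by omega⟩ := xcg _ x _ _ _ _ (by omega)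

set_option maxHeartbeats 1000000 in
lemma g4main (K M2 : ℕ) (hM2 : M2 < K) (hk : 2 ≤ K + 2) (x : Fin (2 * (K + 2) + 1) → Bool) :
    Vt (K + 2) hk x ((K + 2) * ((K + 2) + 1)) ⟨2 * K + 4 - M2, by omega⟩
      = x ⟨2 * K + 4 - M2, by omega⟩ := by
  obtain ⟨D, hD⟩ : ∃ D, K = M2 + 1 + D := ⟨K - 1 - M2, by omega⟩
  have e2 : (K + 2) * ((K + 2) + 1) = K * K + 5 * K + 6 := by ring
  have F1 : (K + 1) * (K + 3) = K * K + 4 * K + 3 := by ring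
  have F2 : K * (K + 3) = K * K + 3 * K := by ring
  have F3 : (M2 + 1) * (K + 3) = M2 * K + 3 * M2 + K + 3 := by ring
  have F4 : (M2 + 2) * (K + 3) = M2 * K + 3 * M2 + 2 * K + 6 := by ring
  have F5 : M2 * (K + 2) = M2 * K + 2 * M2 := by ring
  have F6 : (M2 + 1) * (K + 2) = M2 * K + 2 * M2 + K + 2 := by ring
  have F7 : D * (K + 2) = D * K + 2 * D := by ring
  have F8 : K * K = M2 * K + D * K + K := by rw [hD]; ring
  have F9 : D * K = K * D := by ring
  have s1 : Vt (K + 2) hk x ((K + 2) * ((K + 2) + 1)) ⟨2 * K + 4 - M2, by omega⟩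
      = Vt (K + 2) hk x ((K + 1) * (K + 3) + (M2 + 2) + 1) ⟨2 * K + 4 - M2, by omega⟩ :=
    stay_big (K + 2) hk x ((K + 1) * (K + 3) + (M2 + 2) + 1) ((K + 2) * ((K + 2) + 1))
      (2 * K + 4 - M2) (by omega) (by omega) (by omega) (by omega)
      ((K + 1) * (K + 3) + (M2 + 2))
      (by rw [qmod (K + 3) (K + 1) (M2 + 2) _ (by omega) (by omega)]; omega)
      (by omega) (by omega)
  have s2 : Vt (K + 2) hk x ((K + 1) * (K + 3) + (M2 + 2) + 1) ⟨(2 * K + 3 - M2) + 1, by omega⟩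
      = Vt (K + 2) hk x ((K + 1) * (K + 3) + (M2 + 2)) ⟨2 * K + 3 - M2, by omega⟩ := by
    apply stepMem (K + 2) hk x ((K + 1) * (K + 3) + (M2 + 2)) (2 * K + 3 - M2)
      (by omega) (by omega)
    refine Or.inr ?_
    rw [qmod (K + 3) (K + 1) (M2 + 2) _ (by omega) (by omega),
      oddSeq_two _ _ (by omega) (by omega)]
    omega
  have s3 : Vt (K + 2) hk x ((K + 1) * (K + 3) + (M2 + 2)) ⟨2 * K + 3 - M2, by omega⟩
      = Vt (K + 2) hk x (K * (K + 3) + (M2 + 3) + 1) ⟨2 * K + 3 - M2, by omega⟩ :=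
    stay_big (K + 2) hk x (K * (K + 3) + (M2 + 3) + 1) ((K + 1) * (K + 3) + (M2 + 2))
      (2 * K + 3 - M2) (by omega) (by omega) (by omega) (by omega)
      (K * (K + 3) + (M2 + 3))
      (by rw [qmod (K + 3) K (M2 + 3) _ (by omega) (by omega)]; omega)
      (by omega) (by omega)
  have s4 : Vt (K + 2) hk x (K * (K + 3) + (M2 + 3) + 1) ⟨2 * K + 3 - M2, by omega⟩
      = Vt (K + 2) hk x (K * (K + 3) + (M2 + 3) - D * (K + 2) + 1) ⟨2 * K + 3 - M2 - D, by omega⟩ :=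
    chainC (K + 2) hk x (K * (K + 3) + (M2 + 3)) (2 * K + 3 - M2) (by omega)
      (by rw [qmod (K + 3) K (M2 + 3) _ (by omega) (by omega)]; omega) (by omega)
      D (by omega) (by omega)
  have s5 : Vt (K + 2) hk x ((M2 + 1) * (K + 3) + (K + 2) + 1) ⟨(K + 3) + 1, by omega⟩
      = Vt (K + 2) hk x ((M2 + 1) * (K + 3) + (K + 2)) ⟨K + 3, by omega⟩ := by
    apply stepMem (K + 2) hk x ((M2 + 1) * (K + 3) + (K + 2)) (K + 3) (by omega) (by omega)
    refine Or.inr ?_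
    rw [qmod (K + 3) (M2 + 1) (K + 2) _ (by omega) (by omega),
      oddSeq_two _ _ (by omega) (by omega)]
    omega
  have s6 : Vt (K + 2) hk x ((M2 + 1) * (K + 3) + (K + 2)) ⟨(K + 2) + 1, by omega⟩
      = Vt (K + 2) hk x ((M2 + 1) * (K + 3) + 2) ⟨(K + 2) + 1, by omega⟩ :=
    stay_k1 (K + 2) hk x ((M2 + 1) * (K + 3) + 2) ((M2 + 1) * (K + 3) + (K + 2))
      (by omega) (by omega) ((M2 + 1) * (K + 3) + 1)
      (qmod (K + 3) (M2 + 1) 1 _ (by omega) (by omega)) (by omega) (by omega)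
  have s7 : Vt (K + 2) hk x ((M2 + 1) * (K + 3) + 1 + 1) ⟨(K + 2) + 1, by omega⟩
      = Vt (K + 2) hk x ((M2 + 1) * (K + 3) + 1) ⟨K + 2, by omega⟩ := by
    apply stepMem (K + 2) hk x ((M2 + 1) * (K + 3) + 1) (K + 2) (by omega) (by omega)
    refine Or.inr ?_
    rw [qmod (K + 3) (M2 + 1) 1 _ (by omega) (by omega), oddSeq_one]
  have s8 : Vt (K + 2) hk x ((M2 + 1) * (K + 3) + 1) ⟨(K + 1) + 1, by omega⟩
      = Vt (K + 2) hk x ((M2 + 1) * (K + 3)) ⟨K + 1, by omega⟩ := by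
    apply stepMem (K + 2) hk x ((M2 + 1) * (K + 3)) (K + 1) (by omega) (by omega)
    refine Or.inr ?_
    rw [qmod (K + 3) (M2 + 1) 0 _ (by omega) (by omega), oddSeq_zero]
  have s9 : Vt (K + 2) hk x ((M2 + 1) * (K + 3)) ⟨K + 1, by omega⟩
      = Vt (K + 2) hk x ((M2 + 1) * (K + 2)) ⟨K + 1, by omega⟩ :=
    stay_lo (K + 2) hk x ((M2 + 1) * (K + 2)) ((M2 + 1) * (K + 3)) (K + 1) (by omega)
      (by omega) (by omega) (M2 * (K + 2) + (K + 1))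
      (qmod (K + 2) M2 (K + 1) _ (by omega) (by omega)) (by omega) (by omega)
  have s10 : Vt (K + 2) hk x (M2 * (K + 2) + (K + 1) + 1) ⟨K + 1, by omega⟩
      = Vt (K + 2) hk x (M2 * (K + 2)) ⟨2 * (K + 2), by omega⟩ :=
    chainF (K + 2) hk x (M2 * (K + 2)) (qmod (K + 2) M2 0 _ (by omega) (by omega))
      (K + 1) (by omega) (by omega)
  calc Vt (K + 2) hk x ((K + 2) * ((K + 2) + 1)) ⟨2 * K + 4 - M2, by omega⟩
      = Vt (K + 2) hk x ((K + 1) * (K + 3) + (M2 + 2) + 1) ⟨2 * K + 4 - M2, by omega⟩ := s1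
    _ = Vt (K + 2) hk x ((K + 1) * (K + 3) + (M2 + 2) + 1) ⟨(2 * K + 3 - M2) + 1, by omega⟩ :=
        Vt_congr _ hk x _ _ _ _ (by omega) (by omega) (by omega) (by omega)
    _ = Vt (K + 2) hk x ((K + 1) * (K + 3) + (M2 + 2)) ⟨2 * K + 3 - M2, by omega⟩ := s2
    _ = Vt (K + 2) hk x (K * (K + 3) + (M2 + 3) + 1) ⟨2 * K + 3 - M2, by omega⟩ := s3
    _ = Vt (K + 2) hk x (K * (K + 3) + (M2 + 3) - D * (K + 2) + 1) ⟨2 * K + 3 - M2 - D, by omega⟩ := s4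
    _ = Vt (K + 2) hk x ((M2 + 1) * (K + 3) + (K + 2) + 1) ⟨(K + 3) + 1, by omega⟩ :=
        Vt_congr _ hk x _ _ _ _ (by omega) (by omega) (by omega) (by omega)
    _ = Vt (K + 2) hk x ((M2 + 1) * (K + 3) + (K + 2)) ⟨K + 3, by omega⟩ := s5
    _ = Vt (K + 2) hk x ((M2 + 1) * (K + 3) + 2) ⟨(K + 2) + 1, by omega⟩ := s6
    _ = Vt (K + 2) hk x ((M2 + 1) * (K + 3) + 1 + 1) ⟨(K + 2) + 1, by omega⟩ :=
        Vt_congr _ hk x _ _ _ _ (by omega) (by omega) (by omega) (by omega)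
    _ = Vt (K + 2) hk x ((M2 + 1) * (K + 3) + 1) ⟨K + 2, by omega⟩ := s7
    _ = Vt (K + 2) hk x ((M2 + 1) * (K + 3)) ⟨K + 1, by omega⟩ := s8
    _ = Vt (K + 2) hk x ((M2 + 1) * (K + 2)) ⟨K + 1, by omega⟩ := s9
    _ = Vt (K + 2) hk x (M2 * (K + 2) + (K + 1) + 1) ⟨K + 1, by omega⟩ :=
        Vt_congr _ hk x _ _ _ _ (by omega) (by omega) (by omega) (by omega)
    _ = Vt (K + 2) hk x (M2 * (K + 2)) ⟨2 * (K + 2), by omega⟩ := s10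
    _ = x ⟨2 * K + 4 - M2, by omega⟩ := g4tail K M2 hM2 hk x

set_option maxHeartbeats 1000000 in
lemma goal4b (k : ℕ) (hk : 2 ≤ k) (x : Fin (2 * k + 1) → Bool) (v : ℕ)
    (hv1 : k + 3 ≤ v) (hv2 : v ≤ 2 * k) :
    Vt k hk x (k * (k + 1)) ⟨v, by omega⟩ = x ⟨v, by omega⟩ := by
  obtain ⟨K, rfl⟩ : ∃ K, k = K + 2 := ⟨k - 2, by omega⟩
  have h1 : v = 2 * K + 4 - (2 * K + 4 - v) := by omega
  have h2 : 2 * K + 4 - v < K := by omega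
  calc Vt (K + 2) hk x ((K + 2) * ((K + 2) + 1)) ⟨v, by omega⟩
      = Vt (K + 2) hk x ((K + 2) * ((K + 2) + 1)) ⟨2 * K + 4 - (2 * K + 4 - v), by omega⟩ :=
        Vt_congr _ hk x _ _ _ _ (by omega) (by omega) (by omega) (by omega)
    _ = x ⟨2 * K + 4 - (2 * K + 4 - v), by omega⟩ := g4main K (2 * K + 4 - v) h2 hk x
    _ = x ⟨v, by omega⟩ := xcg _ x _ _ _ _ (by omega)

theorem positive_cycle_odd_parallelization (k : ℕ) (hk : 2 ≤ k)
    (x : Fin (2 * k + 1) → Bool) :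
    (∀ i : Fin (2 * k + 1), i.val < k →
        run (posCycle (2 * k + 1)) (oddBlocks k hk) x i = x ⟨k - 1, by omega⟩) ∧
    run (posCycle (2 * k + 1)) (oddBlocks k hk) x ⟨k, by omega⟩ = x ⟨k + 2, by omega⟩ ∧
    run (posCycle (2 * k + 1)) (oddBlocks k hk) x ⟨k + 1, by omega⟩ = x ⟨k + 2, by omega⟩ ∧
    (∀ j : Fin (2 * k + 1), k + 2 ≤ j.val →
        run (posCycle (2 * k + 1)) (oddBlocks k hk) x j = x j) := by
  have hrw := Vt_full k hk x
  refine ⟨fun i hi => ?_, ?_, ?_, fun j hj => ?_⟩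
  · rw [hrw]
    exact goal1 k hk x i.val hi
  · rw [hrw]
    exact goal2 k hk x
  · rw [hrw]
    exact goal3 k hk x
  · rw [hrw]
    rcases Nat.eq_or_lt_of_le hj with he | hl
    · have hje : j = ⟨k + 2, by omega⟩ := Fin.ext he.symm
      rw [hje]
      exact goal4a k hk x
    · exact goal4b k hk x j.val (by omega) (by omega)
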